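/- arXiv:1404.5094 — 3 statements merged into one kernel-verified Lean document; each statement's English description precedes it below -/
import Mathlib

section
/- Let L ⊆ ℝ be a Lebesgue measurable set with the property that for every real number α ≥ 0 there exists j ∈ {1,…,8} with jα ∈ L. Then for every T ≥ 0, λ([0,T] ∩ L) ≥ (35/761)·T, where λ denotes Lebesgue measure on ℝ. (Note 761/35 = 8·(1 + 1/2 + ⋯ + 1/8) < 22.) -/
open MeasureTheory

/-- If `L ⊆ ℝ` is Lebesgue measurable and for every `α ≥ 0` some multiple
`jα` with `1 ≤ j ≤ 8` lies in `L`, then `λ([0,T] ∩ L) ≥ (35/761)·T` for all `T ≥ 0`. -/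
theorem stmt_4 (L : Set ℝ) (hL : MeasurableSet L)
    (h : ∀ α : ℝ, 0 ≤ α → ∃ j : ℕ, 1 ≤ j ∧ j ≤ 8 ∧ (j : ℝ) * α ∈ L) :
    ∀ T : ℝ, 0 ≤ T →
      ENNReal.ofReal (35 / 761 * T) ≤ volume (Set.Icc (0:ℝ) T ∩ L) := by
  intro T hT
  set A : Set ℝ := Set.Icc (0:ℝ) T ∩ L with hA
  -- covering lemma
  have hcov : Set.Icc (0:ℝ) (T/8) ⊆
      ⋃ j ∈ Finset.Icc (1:ℕ) 8, (((j : ℕ) : ℝ) * ·) ⁻¹' A := by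
    intro α hα
    obtain ⟨j, hj1, hj8, hjL⟩ := h α hα.1
    refine Set.mem_biUnion (Finset.mem_Icc.mpr ⟨hj1, hj8⟩) ?_
    have hjα : (j:ℝ) * α ∈ Set.Icc (0:ℝ) T := by
      constructor
      · exact mul_nonneg (Nat.cast_nonneg j) hα.1
      · calc (j:ℝ) * α ≤ 8 * (T/8) := by
              apply mul_le_mul _ hα.2 hα.1 (by norm_num)
              exact_mod_cast hj8
          _ = T := by ring
    exact ⟨hjα, hjL⟩
  have hAm : MeasurableSet A := (measurableSet_Icc).inter hL
  have hvol : ∀ j ∈ Finset.Icc (1:ℕ) 8,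
      volume ((((j : ℕ) : ℝ) * ·) ⁻¹' A) = ENNReal.ofReal ((j:ℝ)⁻¹) * volume A := by
    intro j hj
    have hj1 : (1:ℕ) ≤ j := (Finset.mem_Icc.mp hj).1
    have hjne : ((j:ℕ):ℝ) ≠ 0 := by positivity
    rw [Real.volume_preimage_mul_left hjne]
    congr 1
    rw [abs_of_nonneg (by positivity)]
  have key : ENNReal.ofReal (T/8) ≤
      (∑ j ∈ Finset.Icc (1:ℕ) 8, ENNReal.ofReal ((j:ℝ)⁻¹)) * volume A := by
    calc ENNReal.ofReal (T/8) = volume (Set.Icc (0:ℝ) (T/8)) := by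
          rw [Real.volume_Icc, sub_zero]
      _ ≤ volume (⋃ j ∈ Finset.Icc (1:ℕ) 8, (((j : ℕ) : ℝ) * ·) ⁻¹' A) :=
          measure_mono hcov
      _ ≤ ∑ j ∈ Finset.Icc (1:ℕ) 8, volume ((((j : ℕ) : ℝ) * ·) ⁻¹' A) :=
          measure_biUnion_finset_le _ _
      _ = ∑ j ∈ Finset.Icc (1:ℕ) 8, ENNReal.ofReal ((j:ℝ)⁻¹) * volume A :=
          Finset.sum_congr rfl hvol
      _ = (∑ j ∈ Finset.Icc (1:ℕ) 8, ENNReal.ofReal ((j:ℝ)⁻¹)) * volume A :=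
          (Finset.sum_mul _ _ _).symm
  have hsum : (∑ j ∈ Finset.Icc (1:ℕ) 8, ENNReal.ofReal (((j:ℕ):ℝ)⁻¹)) =
      ENNReal.ofReal (761/280) := by
    rw [← ENNReal.ofReal_sum_of_nonneg (fun i _ => by positivity)]
    congr 1
    rw [show Finset.Icc (1:ℕ) 8 = ({1,2,3,4,5,6,7,8} : Finset ℕ) by decide]
    norm_num [Finset.sum_insert]
  rw [hsum] at key
  -- now conclude
  have h2 : ENNReal.ofReal (35/761 * T) = ENNReal.ofReal (280/761) * ENNReal.ofReal (T/8) := by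
    rw [← ENNReal.ofReal_mul (by norm_num)]
    ring_nf
  rw [h2]
  calc ENNReal.ofReal (280/761) * ENNReal.ofReal (T/8)
      ≤ ENNReal.ofReal (280/761) * (ENNReal.ofReal (761/280) * volume A) := by
        exact mul_le_mul_right key _
    _ = (ENNReal.ofReal (280/761) * ENNReal.ofReal (761/280)) * volume A := by ring
    _ = volume A := by
        rw [← ENNReal.ofReal_mul (by norm_num)]
        norm_num
end

section
/- There exists an integer k_0 such that for all integers k ≥ k_0 the following holds. Set A = log k - 2 log log k and T = (e^A - 1)/A, and define g : [0,∞) → ℝ by g(t) = 1/(1+At) for t ∈ [0,T] and g(t) = 0 for t > T. Then for every real x ≥ 0, ( ∫_0^x g(t) dt )² ≤ (log k) · ∫_0^x g(t)² dt. -/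
open MeasureTheory intervalIntegral

/-- With `A = log k - 2 log log k` and `T = (e^A - 1)/A`, this is the function
`g(t) = 1/(1 + At)` for `t ∈ [0, T]` and `g(t) = 0` otherwise. -/
noncomputable def gfun (k : ℕ) (t : ℝ) : ℝ :=
  if 0 ≤ t ∧ t ≤ (Real.exp (Real.log k - 2 * Real.log (Real.log k)) - 1) /
      (Real.log k - 2 * Real.log (Real.log k)) then
    1 / (1 + (Real.log k - 2 * Real.log (Real.log k)) * t)
  else 0

theorem stmt_17 :
    ∃ k₀ : ℕ, ∀ k : ℕ, k₀ ≤ k → ∀ x : ℝ, 0 ≤ x →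
      (∫ t in (0:ℝ)..x, gfun k t) ^ 2
        ≤ Real.log k * ∫ t in (0:ℝ)..x, (gfun k t) ^ 2 := by
  refine ⟨100, fun k hk x hx => ?_⟩
  have hk2 : (100:ℝ) ≤ (k:ℝ) := by exact_mod_cast hk
  set L := Real.log (k:ℝ) with hLdef
  set A := L - 2 * Real.log L with hAdef
  set T := (Real.exp A - 1) / A with hTdef
  have hg : ∀ t, gfun k t = if 0 ≤ t ∧ t ≤ T then 1/(1+A*t) else 0 := by
    intro t; rw [hTdef, hAdef, hLdef]; rfl
  clear_value L A T
  -- numeric facts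
  have hexp1 : Real.exp 1 < 2.7182818286 := Real.exp_one_lt_d9
  have hL4 : 4 < L := by
    have h1 : Real.log 100 ≤ L := hLdef ▸ Real.log_le_log (by norm_num) hk2
    have h2 : (4:ℝ) < Real.log 100 := by
      rw [Real.lt_log_iff_exp_lt (by norm_num)]
      have : Real.exp 4 = (Real.exp 1)^(4:ℕ) := by
        rw [← Real.exp_nat_mul]; norm_num
      rw [this]
      have h4 : Real.exp 1 ^ 4 < 2.7182818286^4 :=
        pow_lt_pow_left₀ hexp1 (Real.exp_pos 1).le (by norm_num)
      nlinarith
    linarith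
  have hA0 : 0 < A := by
    set s := Real.sqrt L with hs
    have hs2 : s^2 = L := Real.sq_sqrt (by linarith)
    have hsgt : 2 < s := by
      nlinarith [Real.sqrt_nonneg L]
    have hlogs : Real.log s ≤ s - 1 := Real.log_le_sub_one_of_pos (by linarith)
    have hlogL : Real.log L = 2 * Real.log s := by
      rw [← hs2, Real.log_pow]; push_cast; ring
    rw [hAdef, hlogL]
    nlinarith
  have hlogL1 : 1 ≤ Real.log L := by
    rw [Real.le_log_iff_exp_le (by linarith)]
    nlinarith
  have hLA : A + 2 ≤ L := by rw [hAdef]; linarith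
  have hT0 : 0 ≤ T := by
    rw [hTdef]
    apply div_nonneg _ hA0.le
    nlinarith [Real.add_one_le_exp A]
  have hpos : ∀ t : ℝ, 0 ≤ t → 0 < 1 + A * t := by
    intro t ht; nlinarith
  -- integral computations
  have I1 : ∀ y : ℝ, 0 ≤ y → ∫ t in (0:ℝ)..y, 1/(1+A*t) = Real.log (1+A*y)/A := by
    intro y hy
    have hd : ∀ t ∈ Set.uIcc (0:ℝ) y,
        HasDerivAt (fun t => Real.log (1+A*t)/A) (1/(1+A*t)) t := by
      intro t ht
      rw [Set.uIcc_of_le hy] at ht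
      have hpt := hpos t ht.1
      have h1 : HasDerivAt (fun t : ℝ => 1 + A*t) A t := by
        simpa using ((hasDerivAt_id t).const_mul A).const_add 1
      have h2 := (Real.hasDerivAt_log hpt.ne').comp t h1
      have h3 := h2.div_const A
      refine h3.congr_deriv ?_
      field_simp
    have hcont : ContinuousOn (fun t : ℝ => 1/(1+A*t)) (Set.uIcc 0 y) := by
      apply ContinuousOn.div continuousOn_const (by fun_prop)
      intro t ht
      rw [Set.uIcc_of_le hy] at ht
      exact (hpos t ht.1).ne'
    rw [intervalIntegral.integral_eq_sub_of_hasDerivAt hd hcont.intervalIntegrable]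
    simp
  have I2 : ∀ y : ℝ, 0 ≤ y → ∫ t in (0:ℝ)..y, (1/(1+A*t))^2 = y/(1+A*y) := by
    intro y hy
    have hd : ∀ t ∈ Set.uIcc (0:ℝ) y,
        HasDerivAt (fun t => t/(1+A*t)) ((1/(1+A*t))^2) t := by
      intro t ht
      rw [Set.uIcc_of_le hy] at ht
      have hpt := hpos t ht.1
      have h1 : HasDerivAt (fun t : ℝ => 1 + A*t) A t := by
        simpa using ((hasDerivAt_id t).const_mul A).const_add 1
      have h3 := (hasDerivAt_id t).div h1 hpt.ne'
      refine h3.congr_deriv ?_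
      field_simp
      simp only [id_eq]; ring
    have hcont : ContinuousOn (fun t : ℝ => (1/(1+A*t))^2) (Set.uIcc 0 y) := by
      apply ContinuousOn.pow
      apply ContinuousOn.div continuousOn_const (by fun_prop)
      intro t ht
      rw [Set.uIcc_of_le hy] at ht
      exact (hpos t ht.1).ne'
    rw [intervalIntegral.integral_eq_sub_of_hasDerivAt hd hcont.intervalIntegrable]
    simp
  -- the key case x ≤ T
  have key : ∀ y : ℝ, 0 ≤ y → y ≤ T →
      (∫ t in (0:ℝ)..y, gfun k t) ^ 2 ≤ L * ∫ t in (0:ℝ)..y, (gfun k t) ^ 2 := by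
    intro y hy hyT
    have e1 : ∫ t in (0:ℝ)..y, gfun k t = ∫ t in (0:ℝ)..y, 1/(1+A*t) := by
      apply intervalIntegral.integral_congr
      intro t ht
      rw [Set.uIcc_of_le hy] at ht
      rw [hg t, if_pos ⟨ht.1, ht.2.trans hyT⟩]
    have e2 : ∫ t in (0:ℝ)..y, (gfun k t)^2 = ∫ t in (0:ℝ)..y, (1/(1+A*t))^2 := by
      apply intervalIntegral.integral_congr
      intro t ht
      rw [Set.uIcc_of_le hy] at ht
      show (gfun k t)^2 = (1/(1+A*t))^2
      rw [hg t, if_pos ⟨ht.1, ht.2.trans hyT⟩]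
    rw [e1, e2, I1 y hy, I2 y hy]
    set u := 1 + A*y with hu
    clear_value u
    have hu1 : 1 ≤ u := by nlinarith
    have hupos : (0:ℝ) < u := by linarith
    have huA : u ≤ Real.exp A := by
      rw [hTdef, le_div_iff₀ hA0] at hyT
      nlinarith
    have hlog1 : Real.log u ≤ u - 1 := Real.log_le_sub_one_of_pos hupos
    have hlog2 : Real.log u ≤ A := by
      calc Real.log u ≤ Real.log (Real.exp A) := Real.log_le_log hupos huA
        _ = A := Real.log_exp A
    have hlog0 : 0 ≤ Real.log u := Real.log_nonneg hu1
    have h1 : u * Real.log u ≤ (u-1)*(A+1) := by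
      nlinarith [mul_le_mul_of_nonneg_left hlog2 (by linarith : (0:ℝ) ≤ u - 1)]
    have h2 : u * (Real.log u)^2 ≤ A*L*(u-1) := by
      calc u * (Real.log u)^2 = Real.log u * (u * Real.log u) := by ring
        _ ≤ Real.log u * ((u-1)*(A+1)) := mul_le_mul_of_nonneg_left h1 hlog0
        _ ≤ A * ((u-1)*(A+1)) :=
            mul_le_mul_of_nonneg_right hlog2 (mul_nonneg (by linarith) (by linarith))
        _ ≤ A*L*(u-1) := by
            nlinarith [mul_le_mul_of_nonneg_left (show A+1 ≤ L from by linarith)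
              (mul_nonneg hA0.le (by linarith : (0:ℝ) ≤ u-1))]
    have hfin : L*y*A^2 = A*L*(u-1) := by rw [hu]; ring
    rw [div_pow, show L * (y/u) = (L*y)/u by ring,
      div_le_div_iff₀ (by positivity) hupos]
    calc (Real.log u)^2 * u = u * (Real.log u)^2 := by ring
      _ ≤ A*L*(u-1) := h2
      _ = L*y*A^2 := hfin.symm
  rcases le_or_gt x T with h | h
  · exact key x hx h
  · have hcontT : ContinuousOn (fun t : ℝ => 1/(1+A*t)) (Set.uIcc 0 T) := by
      apply ContinuousOn.div continuousOn_const (by fun_prop)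
      intro t ht
      rw [Set.uIcc_of_le hT0] at ht
      exact (hpos t ht.1).ne'
    have eqOnT : Set.EqOn (fun t : ℝ => 1/(1+A*t)) (gfun k) (Set.uIcc 0 T) := by
      intro t ht
      rw [Set.uIcc_of_le hT0] at ht
      rw [hg t, if_pos ⟨ht.1, ht.2⟩]
    have intT : IntervalIntegrable (gfun k) volume 0 T := by
      rw [intervalIntegrable_iff]
      exact (intervalIntegrable_iff.mp hcontT.intervalIntegrable).congr_fun
        (eqOnT.mono Set.uIoc_subset_uIcc) measurableSet_uIoc
    have intT2 : IntervalIntegrable (fun t => (gfun k t)^2) volume 0 T := by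
      rw [intervalIntegrable_iff]
      exact (intervalIntegrable_iff.mp (hcontT.pow 2).intervalIntegrable).congr_fun
        (fun t ht => congrArg (· ^ 2) (eqOnT (Set.uIoc_subset_uIcc ht))) measurableSet_uIoc
    have gzero : ∀ t ∈ Set.Ioc T x, gfun k t = 0 := by
      intro t ht
      rw [hg t, if_neg]
      rintro ⟨-, h2⟩
      exact absurd h2 (not_le.2 ht.1)
    have intTx : IntervalIntegrable (gfun k) volume T x := by
      rw [intervalIntegrable_iff]
      apply (integrableOn_zero : IntegrableOn (fun _ : ℝ => (0:ℝ)) _ _).congr_fun _ measurableSet_uIoc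
      intro t ht
      rw [Set.uIoc_of_le h.le] at ht
      exact (gzero t ht).symm
    have intTx2 : IntervalIntegrable (fun t => (gfun k t)^2) volume T x := by
      rw [intervalIntegrable_iff]
      apply (integrableOn_zero : IntegrableOn (fun _ : ℝ => (0:ℝ)) _ _).congr_fun _ measurableSet_uIoc
      intro t ht
      rw [Set.uIoc_of_le h.le] at ht
      show (0:ℝ) = gfun k t ^ 2
      rw [gzero t ht]; norm_num
    have z1 : ∫ t in T..x, gfun k t = 0 := by
      rw [intervalIntegral.integral_of_le h.le]
      exact MeasureTheory.setIntegral_eq_zero_of_forall_eq_zero gzero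
    have z2 : ∫ t in T..x, (gfun k t)^2 = 0 := by
      rw [intervalIntegral.integral_of_le h.le]
      apply MeasureTheory.setIntegral_eq_zero_of_forall_eq_zero
      intro t ht; rw [gzero t ht]; norm_num
    have s1 : ∫ t in (0:ℝ)..x, gfun k t = ∫ t in (0:ℝ)..T, gfun k t := by
      rw [← intervalIntegral.integral_add_adjacent_intervals intT intTx, z1, add_zero]
    have s2 : ∫ t in (0:ℝ)..x, (gfun k t)^2 = ∫ t in (0:ℝ)..T, (gfun k t)^2 := by
      rw [← intervalIntegral.integral_add_adjacent_intervals intT2 intTx2, z2, add_zero]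
    rw [s1, s2]
    exact key T hT0 le_rfl
end

section
/- Let {h_1, …, h_k} be an admissible k-tuple of integers, let S be a finite set of integers, and let 𝒫 be a set of prime numbers, such that for some real x ≥ 2: {h_1, …, h_k} ⊆ S ⊆ [0, x²] and the number of primes p ∈ 𝒫 with p > x is greater than |S| + k. Then there exists a family of integers (a_p)_{p ∈ 𝒫} such that {h_1, …, h_k} = S \ ⋃_{p ∈ 𝒫} {g ∈ ℤ : g ≡ a_p (mod p)}. -/
/-- A `k`-tuple `h` of integers is admissible if for every prime `p` there is
an integer `n` with `∏ i (n + h i) ≢ 0 (mod p)`. -/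
def AdmissibleZTuple {k : ℕ} (h : Fin k → ℤ) : Prop :=
  ∀ p : ℕ, p.Prime → ∃ n : ℤ, ∀ i, ¬ ((p : ℤ) ∣ n + h i)

theorem stmt_18 (k : ℕ) (h : Fin k → ℤ) (hinj : Function.Injective h)
    (hadm : AdmissibleZTuple h) (S : Finset ℤ) (P : Set ℕ)
    (hP : ∀ p ∈ P, p.Prime) (x : ℝ) (hx : 2 ≤ x)
    (hsub : ∀ i, h i ∈ S) (hS : ∀ s ∈ S, 0 ≤ s ∧ (s : ℝ) ≤ x ^ 2)
    (hcard : ∃ F : Finset ℕ, ↑F ⊆ P ∧ (∀ p ∈ F, x < (p : ℝ)) ∧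
      S.card + k < F.card) :
    ∃ a : ℕ → ℤ,
      (S : Set ℤ) \ (⋃ p ∈ P, {g : ℤ | (p : ℤ) ∣ (g - a p)}) = Set.range h := by
  classical
  obtain ⟨F, hFP, hFx, hFcard⟩ := hcard
  have hx0 : (0 : ℝ) < x := lt_of_lt_of_le two_pos hx
  set T : Finset ℤ := S.filter (fun s => ∀ i, h i ≠ s) with hT
  set allowed : ℤ → Finset ℕ :=
    fun t => F.filter (fun p => ∀ i, ¬ ((p : ℤ) ∣ h i - t)) with hallowed
  -- for each t ∈ T, the "bad" primes are at most k
  have hbadcard : ∀ t ∈ T, (F.filter (fun p : ℕ => ¬ ∀ i, ¬ ((p : ℤ) ∣ h i - t))).card ≤ k := by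
    intro t ht
    obtain ⟨htS, htnr⟩ := Finset.mem_filter.1 ht
    have hsub2 : F.filter (fun p : ℕ => ¬ ∀ i, ¬ ((p : ℤ) ∣ h i - t)) ⊆
        Finset.univ.biUnion (fun i : Fin k => F.filter (fun p : ℕ => (p : ℤ) ∣ h i - t)) := by
      intro p hp
      simp only [Finset.mem_filter, not_forall, not_not] at hp
      obtain ⟨hpF, i, hi⟩ := hp
      exact Finset.mem_biUnion.2 ⟨i, Finset.mem_univ _, Finset.mem_filter.2 ⟨hpF, hi⟩⟩
    have hone : ∀ i : Fin k, (F.filter (fun p : ℕ => (p : ℤ) ∣ h i - t)).card ≤ 1 := by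
      intro i
      rw [Finset.card_le_one]
      intro p hp q hq
      rw [Finset.mem_filter] at hp hq
      by_contra hpq
      have hpprime := hP p (hFP hp.1)
      have hqprime := hP q (hFP hq.1)
      have hcop : IsCoprime (p : ℤ) (q : ℤ) :=
        Nat.isCoprime_iff_coprime.2 ((Nat.coprime_primes hpprime hqprime).2 hpq)
      have hdvd : (p : ℤ) * q ∣ h i - t := hcop.mul_dvd hp.2 hq.2
      have hd0 : h i - t ≠ 0 := sub_ne_zero.2 (htnr i)
      have hle : (p : ℤ) * q ≤ |h i - t| :=
        Int.le_of_dvd (abs_pos.2 hd0) ((dvd_abs _ _).2 hdvd)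
      have hleR : (p : ℝ) * q ≤ |((h i : ℝ)) - t| := by
        have : ((p : ℤ) * q : ℝ) ≤ (|h i - t| : ℤ) := by exact_mod_cast hle
        push_cast at this
        convert this using 2 <;> push_cast <;> ring
      have habs : |((h i : ℝ)) - t| ≤ x ^ 2 := by
        obtain ⟨hh0, hhx⟩ := hS (h i) (hsub i)
        obtain ⟨ht0, htx⟩ := hS t htS
        rw [abs_sub_le_iff]
        have ht0' : (0:ℝ) ≤ (t : ℝ) := by exact_mod_cast ht0
        have hh0' : (0:ℝ) ≤ ((h i : ℤ) : ℝ) := by exact_mod_cast hh0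
        constructor <;> linarith
      have hgt : x ^ 2 < (p : ℝ) * q := by
        have := mul_lt_mul'' (hFx p hp.1) (hFx q hq.1) hx0.le hx0.le
        nlinarith
      linarith
    calc (F.filter (fun p : ℕ => ¬ ∀ i, ¬ ((p : ℤ) ∣ h i - t))).card
        ≤ (Finset.univ.biUnion (fun i : Fin k =>
            F.filter (fun p : ℕ => (p : ℤ) ∣ h i - t))).card := Finset.card_le_card hsub2
      _ ≤ ∑ i : Fin k, (F.filter (fun p : ℕ => (p : ℤ) ∣ h i - t)).card := Finset.card_biUnion_le
      _ ≤ ∑ _i : Fin k, 1 := Finset.sum_le_sum (fun i _ => hone i)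
      _ = k := by simp
  -- allowed sets are large
  have hallowedcard : ∀ t ∈ T, S.card < (allowed t).card := by
    intro t ht
    have hsplit := Finset.card_filter_add_card_filter_not
      (s := F) (p := fun p => ∀ i, ¬ ((p : ℤ) ∣ h i - t))
    have := hbadcard t ht
    simp only [hallowed]
    omega
  -- Hall's theorem: injective choice of primes
  have hall : ∀ s : Finset {t : ℤ // t ∈ T},
      s.card ≤ (s.biUnion (fun t => allowed t.1)).card := by
    intro s
    rcases s.eq_empty_or_nonempty with rfl | ⟨t0, ht0⟩
    · simp
    · have hsub3 : allowed t0.1 ⊆ s.biUnion (fun t => allowed t.1) :=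
        Finset.subset_biUnion_of_mem (fun t => allowed t.1) ht0
      have h1 : s.card ≤ T.card := by
        have := Finset.card_le_univ s
        simpa [Fintype.card_coe] using this
      have h2 : T.card ≤ S.card := Finset.card_le_card (Finset.filter_subset _ _)
      have h3 := hallowedcard t0.1 t0.2
      have h4 := Finset.card_le_card hsub3
      omega
  obtain ⟨f, hfinj, hf⟩ :=
    (Finset.all_card_le_biUnion_card_iff_exists_injective (fun t : {t : ℤ // t ∈ T} => allowed t.1)).1 hall
  -- define the residues
  set a : ℕ → ℤ := fun p =>
    if hp : ∃ t : {t : ℤ // t ∈ T}, f t = p then (hp.choose.1 : ℤ)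
    else if hpr : p.Prime then -(hadm p hpr).choose else 0 with ha
  refine ⟨a, ?_⟩
  ext g
  simp only [Set.mem_diff, Finset.coe_sort_coe, Set.mem_iUnion, Set.mem_setOf_eq,
    Set.mem_range, not_exists, Finset.mem_coe]
  constructor
  · rintro ⟨hgS, hgU⟩
    by_contra hgr
    push_neg at hgr
    have hgT : g ∈ T := Finset.mem_filter.2 ⟨hgS, fun i he => hgr i he⟩
    set t : {t : ℤ // t ∈ T} := ⟨g, hgT⟩ with htdef
    have hpF : f t ∈ F := (Finset.mem_filter.1 (hf t)).1
    have hpP : (f t : ℕ) ∈ P := hFP hpF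
    have hex : ∃ t' : {t : ℤ // t ∈ T}, f t' = f t := ⟨t, rfl⟩
    have hap : a (f t) = (hex.choose.1 : ℤ) := dif_pos hex
    have hct : hex.choose = t := hfinj hex.choose_spec
    rw [hct] at hap
    exact hgU (f t) hpP (by rw [hap]; show _ ∣ g - g; simp)
  · rintro ⟨i, rfl⟩
    refine ⟨hsub i, ?_⟩
    intro p hpP hdvd
    by_cases hp : ∃ t : {t : ℤ // t ∈ T}, f t = p
    · have hap : a p = (hp.choose.1 : ℤ) := dif_pos hp
      have hmem : p ∈ allowed hp.choose.1 := by
        have hm := hf hp.choose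
        rw [hp.choose_spec] at hm
        exact hm
      have := (Finset.mem_filter.1 hmem).2 i
      rw [hap] at hdvd
      exact this hdvd
    · have hpr : p.Prime := hP p hpP
      have hap : a p = -(hadm p hpr).choose := (dif_neg hp).trans (dif_pos hpr)
      have hspec := (hadm p hpr).choose_spec i
      rw [hap, sub_neg_eq_add, add_comm] at hdvd
      exact hspec hdvd
end
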